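/- arXiv:1606.07896 — 3 statements merged into one kernel-verified Lean document; each statement's English description precedes it below -/
import Mathlib

section
/- Let $a$, $v$, $w$ be positive reals with $w < v$, and let $\theta \in \mathbb{R}$. The function $r(z) = \frac{1}{2}\log\left(\frac{1+z^2/w}{1+z^2/v}\right) + \frac{1}{2}\frac{w+\theta^2}{w+z^2} - \frac{1}{2}\frac{v+\theta^2}{v+z^2}$ defined for $z \geq 0$ attains its minimum at $z = |\theta|$, with minimum value $\frac{1}{2}\log\left(\frac{1+\theta^2/w}{1+\theta^2/v}\right)$. -/
lemma phi_ineq {a b : ℝ} (ha : 0 < a) (hb : 0 < b) (h : 0 ≤ (a - b) * (b - 1)) :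
    Real.log b + 1/b ≤ Real.log a + 1/a := by
  have h1 : Real.log (b/a) ≤ b/a - 1 := Real.log_le_sub_one_of_pos (by positivity)
  have h2 : Real.log (b/a) = Real.log b - Real.log a := Real.log_div hb.ne' ha.ne'
  have hineq : b/a - 1 ≤ 1/a - 1/b := by
    rw [div_sub_div _ _ ha.ne' hb.ne', div_sub_one ha.ne']
    rw [div_le_div_iff₀ ha (mul_pos ha hb)]
    nlinarith
  linarith

theorem stmt3 (v w θ : ℝ) (hw : 0 < w) (hwv : w < v)
    (r : ℝ → ℝ)
    (hr : ∀ z, r z = (1/2)*Real.log ((1+z^2/w)/(1+z^2/v))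
        + (1/2)*(w+θ^2)/(w+z^2) - (1/2)*(v+θ^2)/(v+z^2)) :
    (∀ z, 0 ≤ z → r |θ| ≤ r z) ∧
    r |θ| = (1/2)*Real.log ((1+θ^2/w)/(1+θ^2/v)) := by
  have hv : 0 < v := hw.trans hwv
  have hs : 0 ≤ θ^2 := sq_nonneg θ
  have hws : 0 < w + θ^2 := by linarith
  have hvs : 0 < v + θ^2 := by linarith
  have rabs : r |θ| = (1/2)*Real.log ((1+θ^2/w)/(1+θ^2/v)) := by
    rw [hr, sq_abs]
    have e1 : (1/2)*(w+θ^2)/(w+θ^2) = 1/2 := by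
      rw [mul_div_assoc, div_self hws.ne']; ring
    have e2 : (1/2)*(v+θ^2)/(v+θ^2) = 1/2 := by
      rw [mul_div_assoc, div_self hvs.ne']; ring
    rw [e1, e2]; ring
  have key : ∀ t : ℝ, 0 ≤ t → Real.log ((1+t/w)/(1+t/v))
      = Real.log (w+t) - Real.log (v+t) + (Real.log v - Real.log w) := by
    intro t ht
    have hwt : 0 < w + t := by linarith
    have hvt : 0 < v + t := by linarith
    have e : (1+t/w)/(1+t/v) = ((w+t)/(v+t)) * (v/w) := by
      field_simp
    rw [e, Real.log_mul (div_pos hwt hvt).ne' (div_pos hv hw).ne',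
      Real.log_div hwt.ne' hvt.ne', Real.log_div hv.ne' hw.ne']
  refine ⟨?_, rabs⟩
  intro z hz
  have ht : 0 ≤ z^2 := sq_nonneg z
  have hwt : 0 < w + z^2 := by linarith
  have hvt : 0 < v + z^2 := by linarith
  set s := θ^2
  set t := z^2
  set a := (w+t)/(w+s) with hadef
  set b := (v+t)/(v+s) with hbdef
  have ha : 0 < a := div_pos hwt hws
  have hb : 0 < b := div_pos hvt hvs
  have hab : 0 ≤ (a - b) * (b - 1) := by
    have e1 : a - b = ((t-s)*(v-w))/((w+s)*(v+s)) := by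
      rw [hadef, hbdef, div_sub_div _ _ hws.ne' hvs.ne']
      congr 1; ring
    have e2 : b - 1 = (t-s)/(v+s) := by
      rw [hbdef, div_sub_one hvs.ne']
      congr 1; ring
    rw [e1, e2, div_mul_div_comm]
    have e3 : (t-s)*(v-w)*(t-s) = (t-s)^2*(v-w) := by ring
    rw [e3]
    exact div_nonneg (mul_nonneg (sq_nonneg _) (by linarith)) (by positivity)
  have hphi := phi_ineq ha hb hab
  have hla : Real.log a = Real.log (w+t) - Real.log (w+s) :=
    Real.log_div hwt.ne' hws.ne'
  have hlb : Real.log b = Real.log (v+t) - Real.log (v+s) :=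
    Real.log_div hvt.ne' hvs.ne'
  have hia : 1/a = (w+s)/(w+t) := one_div_div _ _
  have hib : 1/b = (v+s)/(v+t) := one_div_div _ _
  rw [hla, hlb, hia, hib] at hphi
  rw [rabs, hr z, key t ht, key s hs]
  have hfa : (1/2)*(w+s)/(w+t) = (1/2)*((w+s)/(w+t)) := by ring
  have hfb : (1/2)*(v+s)/(v+t) = (1/2)*((v+s)/(v+t)) := by ring
  rw [hfa, hfb]
  nlinarith [hphi]
end

section
/- Let $0 < a_1 \leq a_2 \leq \cdots$ be a nondecreasing sequence of positive reals with $a_i \to \infty$, let $B > 0$, $\varepsilon, \tilde{\varepsilon} > 0$, and for $\lambda > 0$ define $\tau_i^2(\lambda) = \frac{1}{2}\left[(v - w)\sqrt{1 + \frac{4}{2\lambda a_i^2 (v-w)}} - (v + w)\right]_+$ where $w = 1/(1/\varepsilon^2 + 1/\tilde{\varepsilon}^2)$ and $v = \varepsilon^2$. Then the function $\lambda \mapsto \sum_{i=1}^{\infty} a_i^2 \tau_i^2(\lambda)$ is continuous, strictly decreasing on the set where it is positive, takes arbitrarily large values as $\lambda \to 0^+$ and tends to $0$ as $\lambda \to \infty$;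 hence there is a unique $\lambda^* > 0$ with $\sum_{i=1}^{\infty} a_i^2 \tau_i^2(\lambda^*) = B$. Moreover, for each $\lambda > 0$, only finitely many $\tau_i^2(\lambda)$ are nonzero. -/
set_option maxHeartbeats 1000000

open Filter

theorem stmt9 (a : ℕ → ℝ) (hapos : ∀ i, 0 < a i) (hamono : Monotone a)
    (hatop : Tendsto a atTop atTop)
    (B ε εt : ℝ) (hB : 0 < B) (hε : 0 < ε) (hεt : 0 < εt)
    (w v : ℝ) (hw : w = 1/(1/ε^2 + 1/εt^2)) (hv : v = ε^2)
    (g : ℝ → ℕ → ℝ)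
    (hg : ∀ lam i, g lam i
      = (1/2) * max ((v - w) * Real.sqrt (1 + 4/(2*lam*(a i)^2*(v - w))) - (v + w)) 0)
    (S : ℝ → ℝ) (hS : ∀ lam, S lam = ∑' i, (a i)^2 * g lam i) :
    ContinuousOn S (Set.Ioi 0) ∧
    StrictAntiOn S {lam | 0 < lam ∧ 0 < S lam} ∧
    Tendsto S (nhdsWithin 0 (Set.Ioi 0)) atTop ∧
    Tendsto S atTop (nhds 0) ∧
    (∃! lam, 0 < lam ∧ S lam = B) ∧
    (∀ lam, 0 < lam → {i | g lam i ≠ 0}.Finite) := by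
  -- basic algebraic facts
  have hw1 : w = ε^2*εt^2/(ε^2+εt^2) := by rw [hw]; field_simp; ring
  have hd : 0 < v - w := by
    have h2 : v - w = ε^4/(ε^2+εt^2) := by rw [hv, hw1]; field_simp; ring
    rw [h2]; positivity
  have hs : 0 < v + w := by rw [hv, hw1]; positivity
  have hkey : (v+w)^2 - (v-w)^2 = 4*(v-w)*εt^2 := by rw [hv, hw1]; field_simp; ring
  have hgnn : ∀ lam i, 0 ≤ g lam i := by
    intro lam i; rw [hg]; positivity
  -- support characterization
  have hsupp : ∀ lam, 0 < lam → ∀ i, (0 < g lam i ↔ 2*lam*εt^2*(a i)^2 < 1) := by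
    intro lam hlam i
    have ha2 : (0:ℝ) < (a i)^2 := pow_pos (hapos i) 2
    set t := 4/(2*lam*(a i)^2*(v-w)) with ht
    have htpos : 0 < t := by rw [ht]; positivity
    have htval : t * (2*lam*(a i)^2*(v-w)) = 4 := div_mul_cancel₀ _ (by positivity)
    have h0 : 0 < g lam i ↔ (v+w) < (v-w)*Real.sqrt (1+t) := by
      rw [hg]
      constructor
      · intro h
        have h' : 0 < max ((v-w)*Real.sqrt (1+t) - (v+w)) 0 := by linarith
        rcases lt_max_iff.mp h' with h'' | h'' <;> linarith
      · intro h
        have h' : 0 < max ((v-w)*Real.sqrt (1+t) - (v+w)) 0 :=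
          lt_max_iff.mpr (Or.inl (by linarith))
        linarith
    have h1 : (v+w) < (v-w)*Real.sqrt (1+t) ↔ (v+w)/(v-w) < Real.sqrt (1+t) := by
      rw [div_lt_iff₀ hd]; constructor <;> intro h <;> nlinarith
    have h2 : (v+w)/(v-w) < Real.sqrt (1+t) ↔ ((v+w)/(v-w))^2 < 1+t :=
      Real.lt_sqrt (by positivity)
    have h3 : ((v+w)/(v-w))^2 < 1+t ↔ (v+w)^2 < (v-w)^2*(1+t) := by
      rw [div_pow, div_lt_iff₀ (by positivity)]; constructor <;> intro h <;> nlinarith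
    rw [h0, h1, h2, h3]
    constructor
    · intro h; nlinarith [mul_pos hlam ha2, mul_pos (mul_pos hlam ha2) hd]
    · intro h; nlinarith [mul_pos hlam ha2, mul_pos (mul_pos hlam ha2) hd]
  have hzero : ∀ lam, 0 < lam → ∀ i, ¬ (2*lam*εt^2*(a i)^2 < 1) → g lam i = 0 := by
    intro lam hlam i h
    by_contra h'
    exact h ((hsupp lam hlam i).mp (lt_of_le_of_ne (hgnn lam i) (Ne.symm h')))
  -- finiteness of sublevel sets of a
  have hfinC : ∀ C : ℝ, {i | (a i)^2 < C}.Finite := by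
    intro C
    rcases (hatop.eventually_gt_atTop (Real.sqrt C)).exists_forall_of_atTop with ⟨N, hN⟩
    apply Set.Finite.subset (Set.finite_Iio N)
    intro i hi
    simp only [Set.mem_setOf_eq] at hi
    by_contra h
    have h1 := hN i (le_of_not_gt (by simpa using h))
    have h2 : a i < Real.sqrt C := by
      have := Real.sqrt_lt_sqrt (sq_nonneg (a i)) hi
      rwa [Real.sqrt_sq (hapos i).le] at this
    linarith
  -- support is finite
  have hsuppfin : ∀ lam, 0 < lam → {i | g lam i ≠ 0}.Finite := by
    intro lam hlam
    apply Set.Finite.subset (hfinC (1/(2*lam*εt^2)))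
    intro i hi
    simp only [Set.mem_setOf_eq] at hi ⊢
    have := (hsupp lam hlam i).mp (lt_of_le_of_ne (hgnn lam i) (Ne.symm hi))
    rw [lt_div_iff₀ (by positivity)]; nlinarith
  -- finite sum representation, with support control
  have hFex : ∀ lam0, 0 < lam0 → ∃ F : Finset ℕ,
      (∀ lam, lam0 ≤ lam → S lam = ∑ i ∈ F, (a i)^2 * g lam i) ∧
      (∀ lam, lam0 ≤ lam → ∀ i, g lam i ≠ 0 → i ∈ F) := by
    intro lam0 h0
    refine ⟨(hfinC (1/(2*lam0*εt^2))).toFinset, ?_, ?_⟩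
    · intro lam hlam
      rw [hS]
      apply tsum_eq_sum
      intro i hi
      rw [Set.Finite.mem_toFinset] at hi
      simp only [Set.mem_setOf_eq, not_lt] at hi
      have hlam' : 0 < lam := lt_of_lt_of_le h0 hlam
      have hgz : g lam i = 0 := by
        apply hzero lam hlam' i
        rw [not_lt]
        have hx : 1 ≤ 2*lam0*εt^2*(a i)^2 := by
          rw [div_le_iff₀ (by positivity)] at hi; linarith
        nlinarith [pow_pos (hapos i) 2, sq_nonneg εt]
      rw [hgz, mul_zero]
    · intro lam hlam i hgne
      rw [Set.Finite.mem_toFinset]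
      simp only [Set.mem_setOf_eq]
      have hlam' : 0 < lam := lt_of_lt_of_le h0 hlam
      have hlt := (hsupp lam hlam' i).mp (lt_of_le_of_ne (hgnn lam i) (Ne.symm hgne))
      rw [lt_div_iff₀ (by positivity)]
      nlinarith [pow_pos (hapos i) 2, sq_nonneg εt]
  -- summability
  have hsummable : ∀ lam, 0 < lam → Summable (fun i => (a i)^2 * g lam i) := by
    intro lam hlam
    rcases hFex lam hlam with ⟨F, hF1, hF2⟩
    apply summable_of_ne_finset_zero (s := F)
    intro i hi
    have : g lam i = 0 := by
      by_contra h'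
      exact hi (hF2 lam le_rfl i h')
    rw [this, mul_zero]
  -- per-term continuity
  have hcont : ∀ i, ContinuousOn (fun lam => (a i)^2 * g lam i) (Set.Ioi (0:ℝ)) := by
    intro i
    have h1 : ContinuousOn (fun lam : ℝ => 4/(2*lam*(a i)^2*(v-w))) (Set.Ioi 0) := by
      apply ContinuousOn.div continuousOn_const (by fun_prop)
      intro x hx
      have hx' : 0 < x := hx
      have ha2 : (0:ℝ) < (a i)^2 := pow_pos (hapos i) 2
      exact ne_of_gt (by nlinarith [mul_pos (mul_pos hx' ha2) hd])
    have h2 : ContinuousOn (fun lam : ℝ => Real.sqrt (1 + 4/(2*lam*(a i)^2*(v-w))))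
        (Set.Ioi 0) := Real.continuous_sqrt.comp_continuousOn (continuousOn_const.add h1)
    have h3 : ContinuousOn (fun lam : ℝ => max ((v - w) * Real.sqrt (1 + 4/(2*lam*(a i)^2*(v - w))) - (v + w)) 0) (Set.Ioi 0) :=
      (continuous_id'.max continuous_const).comp_continuousOn
        (((continuousOn_const.mul h2).sub continuousOn_const))
    have h4 := (continuousOn_const.mul (continuousOn_const.mul h3) :
      ContinuousOn (fun lam : ℝ => (a i)^2 * ((1:ℝ)/2 * max ((v - w) * Real.sqrt (1 + 4/(2*lam*(a i)^2*(v - w))) - (v + w)) 0)) (Set.Ioi 0))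
    apply h4.congr
    intro x hx
    simp only [hg, Pi.mul_apply]
  -- per-term monotonicity
  have hmono : ∀ i lam1 lam2, 0 < lam1 → lam1 < lam2 →
      g lam2 i ≤ g lam1 i ∧ (0 < g lam2 i → g lam2 i < g lam1 i) := by
    intro i lam1 lam2 h1 h12
    have ha2 : (0:ℝ) < (a i)^2 := pow_pos (hapos i) 2
    have h2 : (0:ℝ) < lam2 := h1.trans h12
    have htlt : 4/(2*lam2*(a i)^2*(v-w)) < 4/(2*lam1*(a i)^2*(v-w)) := by
      apply div_lt_div_of_pos_left (by norm_num) (by positivity)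
      nlinarith [mul_pos (mul_pos (sub_pos.mpr h12) ha2) hd]
    have hsq : Real.sqrt (1 + 4/(2*lam2*(a i)^2*(v-w))) <
        Real.sqrt (1 + 4/(2*lam1*(a i)^2*(v-w))) := by
      apply Real.sqrt_lt_sqrt (by positivity) (by linarith)
    have hphi : (v-w) * Real.sqrt (1 + 4/(2*lam2*(a i)^2*(v-w))) - (v+w) <
        (v-w) * Real.sqrt (1 + 4/(2*lam1*(a i)^2*(v-w))) - (v+w) := by
      nlinarith
    constructor
    · rw [hg, hg]
      have := max_le_max hphi.le (le_refl (0:ℝ))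
      linarith
    · intro hpos
      rw [hg] at hpos ⊢
      rw [hg]
      have hm : 0 < max ((v-w) * Real.sqrt (1 + 4/(2*lam2*(a i)^2*(v-w))) - (v+w)) 0 := by
        linarith
      rcases lt_max_iff.mp hm with h' | h'
      · have e2 : max ((v-w) * Real.sqrt (1 + 4/(2*lam2*(a i)^2*(v-w))) - (v+w)) 0
            = (v-w) * Real.sqrt (1 + 4/(2*lam2*(a i)^2*(v-w))) - (v+w) :=
          max_eq_left h'.le
        have e1 : max ((v-w) * Real.sqrt (1 + 4/(2*lam1*(a i)^2*(v-w))) - (v+w)) 0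
            = (v-w) * Real.sqrt (1 + 4/(2*lam1*(a i)^2*(v-w))) - (v+w) :=
          max_eq_left (by linarith)
        rw [e1, e2]; linarith
      · linarith
  -- continuity of S
  have hScont : ContinuousOn S (Set.Ioi 0) := by
    intro lam0 hlam0
    have hlam0' : (0:ℝ) < lam0 := hlam0
    rcases hFex (lam0/2) (by linarith) with ⟨F, hF1, _⟩
    have hTcont : ContinuousOn (fun lam => ∑ i ∈ F, (a i)^2 * g lam i) (Set.Ioi 0) := by
      apply continuousOn_finset_sum
      intro i _
      exact hcont i
    have hmem : Set.Ioi (lam0/2) ∈ nhds lam0 :=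
      isOpen_Ioi.mem_nhds (by simp only [Set.mem_Ioi]; linarith)
    have heq : S =ᶠ[nhds lam0] (fun lam => ∑ i ∈ F, (a i)^2 * g lam i) := by
      filter_upwards [hmem] with lam hlam
      exact hF1 lam (le_of_lt hlam)
    have hTat : ContinuousAt (fun lam => ∑ i ∈ F, (a i)^2 * g lam i) lam0 :=
      hTcont.continuousAt (isOpen_Ioi.mem_nhds hlam0')
    exact (hTat.congr heq.symm).continuousWithinAt
  -- strict antitonicity
  have hSanti : StrictAntiOn S {lam | 0 < lam ∧ 0 < S lam} := by
    intro lam1 h1 lam2 h2 h12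
    obtain ⟨h1p, h1S⟩ := h1
    obtain ⟨h2p, h2S⟩ := h2
    rcases hFex lam1 h1p with ⟨F, hF1, hF2⟩
    rw [hF1 lam1 le_rfl, hF1 lam2 h12.le]
    have hex : ∃ i, g lam2 i ≠ 0 := by
      by_contra h
      push_neg at h
      rw [hS] at h2S
      simp only [h, mul_zero, tsum_zero] at h2S
      exact lt_irrefl 0 h2S
    rcases hex with ⟨i0, hi0⟩
    apply Finset.sum_lt_sum
    · intro i _
      have := (hmono i lam1 lam2 h1p h12).1
      nlinarith [pow_pos (hapos i) 2]
    · refine ⟨i0, hF2 lam2 h12.le i0 hi0, ?_⟩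
      have hp := lt_of_le_of_ne (hgnn lam2 i0) (Ne.symm hi0)
      have := (hmono i0 lam1 lam2 h1p h12).2 hp
      nlinarith [pow_pos (hapos i0) 2]
  -- lower bound on S by first term
  have hSlb : ∀ lam, 0 < lam →
      (a 0)^2 * ((1/2) * ((v-w)*Real.sqrt (1 + 4/(2*lam*(a 0)^2*(v-w))) - (v+w))) ≤ S lam := by
    intro lam hlam
    have hle1 : (a 0)^2 * ((1/2) * ((v-w)*Real.sqrt (1 + 4/(2*lam*(a 0)^2*(v-w))) - (v+w)))
        ≤ (a 0)^2 * g lam 0 := by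
      rw [hg]
      have := le_max_left ((v-w)*Real.sqrt (1 + 4/(2*lam*(a 0)^2*(v-w))) - (v+w)) (0:ℝ)
      nlinarith [pow_pos (hapos 0) 2]
    have hle2 : (a 0)^2 * g lam 0 ≤ S lam := by
      rw [hS]
      exact Summable.le_tsum (hsummable lam hlam) 0
        (fun j _ => mul_nonneg (sq_nonneg _) (hgnn lam j))
    linarith
  -- tendsto at 0+
  have hS0 : Tendsto S (nhdsWithin 0 (Set.Ioi 0)) atTop := by
    have ha2 : (0:ℝ) < (a 0)^2 := pow_pos (hapos 0) 2
    have hL : Tendsto (fun lam => (a 0)^2 * ((1/2) *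
        ((v-w)*Real.sqrt (1 + 4/(2*lam*(a 0)^2*(v-w))) - (v+w))))
        (nhdsWithin 0 (Set.Ioi 0)) atTop := by
      have e1 : ∀ x : ℝ, 4/(2*x*(a 0)^2*(v-w)) = (4/(2*(a 0)^2*(v-w))) * x⁻¹ := by
        intro x
        rcases eq_or_ne x 0 with rfl | hx
        · simp
        · field_simp
      have t1 : Tendsto (fun x : ℝ => 4/(2*x*(a 0)^2*(v-w))) (nhdsWithin 0 (Set.Ioi 0)) atTop := by
        simp only [e1]
        exact Tendsto.const_mul_atTop (by positivity) tendsto_inv_nhdsGT_zero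
      have t2 : Tendsto (fun x : ℝ => 1 + 4/(2*x*(a 0)^2*(v-w))) (nhdsWithin 0 (Set.Ioi 0)) atTop :=
        tendsto_atTop_add_const_left _ 1 t1
      have t3 : Tendsto (fun x : ℝ => Real.sqrt (1 + 4/(2*x*(a 0)^2*(v-w))))
          (nhdsWithin 0 (Set.Ioi 0)) atTop := by
        have hsq : Tendsto Real.sqrt atTop atTop := by
          apply tendsto_atTop_atTop.mpr
          intro b
          refine ⟨max 0 (b^2), fun x hx => ?_⟩
          have hxb : b^2 ≤ x := le_trans (le_max_right _ _) hx
          calc b ≤ |b| := le_abs_self b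
          _ = Real.sqrt (b^2) := (Real.sqrt_sq_eq_abs b).symm
          _ ≤ Real.sqrt x := Real.sqrt_le_sqrt hxb
        exact hsq.comp t2
      have t4 : Tendsto (fun x : ℝ => (v-w)*Real.sqrt (1 + 4/(2*x*(a 0)^2*(v-w))))
          (nhdsWithin 0 (Set.Ioi 0)) atTop := Tendsto.const_mul_atTop hd t3
      have t5 : Tendsto (fun x : ℝ => (v-w)*Real.sqrt (1 + 4/(2*x*(a 0)^2*(v-w))) - (v+w))
          (nhdsWithin 0 (Set.Ioi 0)) atTop := tendsto_atTop_add_const_right _ (-(v+w)) t4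
      have t6 := Tendsto.const_mul_atTop (by norm_num : (0:ℝ) < 1/2) t5
      exact Tendsto.const_mul_atTop ha2 t6
    apply tendsto_atTop_mono' _ _ hL
    filter_upwards [self_mem_nhdsWithin] with lam hlam
    exact hSlb lam hlam
  -- S vanishes for large lam
  have hSz : ∀ lam, 1/(2*εt^2*(a 0)^2) ≤ lam → S lam = 0 := by
    intro lam hlam
    have ha2 : (0:ℝ) < (a 0)^2 := pow_pos (hapos 0) 2
    have hlam' : 0 < lam := lt_of_lt_of_le (by positivity) hlam
    rw [hS]
    have : ∀ i, (a i)^2 * g lam i = 0 := by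
      intro i
      have hai : (a 0)^2 ≤ (a i)^2 := by
        have := hamono (Nat.zero_le i)
        nlinarith [hapos 0, hapos i]
      have : g lam i = 0 := by
        apply hzero lam hlam' i
        rw [not_lt]
        rw [div_le_iff₀ (by positivity)] at hlam
        nlinarith [sq_nonneg εt]
      rw [this, mul_zero]
    simp only [this, tsum_zero]
  -- tendsto at infinity
  have hStop : Tendsto S atTop (nhds 0) := by
    have : S =ᶠ[atTop] (fun _ => (0:ℝ)) := by
      filter_upwards [eventually_ge_atTop (1/(2*εt^2*(a 0)^2))] with lam hlam
      exact hSz lam hlam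
    exact Tendsto.congr' this.symm tendsto_const_nhds
  refine ⟨hScont, hSanti, hS0, hStop, ?_, hsuppfin⟩
  -- existence and uniqueness
  have ha2 : (0:ℝ) < (a 0)^2 := pow_pos (hapos 0) 2
  set Λ := 1/(2*εt^2*(a 0)^2) with hΛ
  have hΛpos : 0 < Λ := by positivity
  have hev : ∀ᶠ lam in nhdsWithin 0 (Set.Ioi 0), B < S lam ∧ lam ∈ Set.Ioo (0:ℝ) Λ := by
    refine (hS0.eventually_gt_atTop B).and ?_
    exact eventually_of_mem (Ioo_mem_nhdsGT_of_mem ⟨le_rfl, hΛpos⟩) (fun x hx => hx)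
  rcases hev.exists with ⟨lams, hlamsB, hlams0, hlamsΛ⟩
  have hIVT := intermediate_value_Icc' (le_of_lt hlamsΛ)
    (hScont.mono (fun x hx => lt_of_lt_of_le hlams0 hx.1))
  have hBmem : B ∈ Set.Icc (S Λ) (S lams) := by
    rw [hSz Λ le_rfl]
    exact ⟨hB.le, hlamsB.le⟩
  rcases hIVT hBmem with ⟨lamst, hlamstmem, hlamstval⟩
  have hlamstpos : 0 < lamst := lt_of_lt_of_le hlams0 hlamstmem.1
  refine ⟨lamst, ⟨hlamstpos, hlamstval⟩, ?_⟩
  intro lam' ⟨hpos', hval'⟩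
  by_contra hne
  have hmem1 : lam' ∈ {lam | 0 < lam ∧ 0 < S lam} := ⟨hpos', by rw [hval']; exact hB⟩
  have hmem2 : lamst ∈ {lam | 0 < lam ∧ 0 < S lam} := ⟨hlamstpos, by rw [hlamstval]; exact hB⟩
  rcases lt_or_gt_of_ne hne with h | h
  · have := hSanti hmem1 hmem2 h
    rw [hval', hlamstval] at this
    exact lt_irrefl B this
  · have := hSanti hmem2 hmem1 h
    rw [hval', hlamstval] at this
    exact lt_irrefl B this
end

section
/- Let $d$ be a positive integer, let $\{B_j\}_{j=1}^J$ be a partition of $\{1,\ldots,d\}$ into consecutive blocks with cardinalities $b_j$ satisfying $\max_{1\leq j \leq J-1} b_{j+1}/b_j \leq 1+\eta$ for some $\eta > 0$, let $0 < w < v$, and let $f(x) = \log\left(\frac{1+x/w}{1+x/v}\right) - \frac{(v-w)x}{(v+x)(w+x)}$ for $x \geq 0$. For any nonincreasing sequence $\tau_1^2 \geq \tau_2^2 \geq \cdots \geq \tau_d^2 \geq 0$, define the blockwise-constant sequence $\bar{\tau}_i^2 = \tau_{m_j}^2$ for $i \in B_j$ where $m_j$ is the first index of block $B_j$. Then $\frac{1}{2}\sum_{i=1}^d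 f(\bar{\tau}_i^2) \leq \frac{b_1}{2}\log(v/w) + (1+\eta)\cdot\frac{1}{2}\sum_{i=1}^d f(\tau_i^2)$. -/
lemma fmono_aux (v w : ℝ) (hw : 0 < w) (hwv : w < v) {a c : ℝ} (ha : 0 ≤ a) (hac : a ≤ c) :
    Real.log ((1+a/w)/(1+a/v)) - (v-w)*a/((v+a)*(w+a))
      ≤ Real.log ((1+c/w)/(1+c/v)) - (v-w)*c/((v+c)*(w+c)) := by
  have hv : 0 < v := hw.trans hwv
  set F : ℝ → ℝ := fun x => Real.log (1+x/w) - Real.log (1+x/v) - (v-w)*x/((v+x)*(w+x)) with hF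
  have key : ∀ x : ℝ, 0 ≤ x → HasDerivAt F ((v-w)*x*(v+w+2*x)/((v+x)*(w+x))^2) x := by
    intro x hx
    have hwx : (0:ℝ) < w + x := by linarith
    have hvx : (0:ℝ) < v + x := by linarith
    have h1 : (0:ℝ) < 1 + x/w := by positivity
    have h2 : (0:ℝ) < 1 + x/v := by positivity
    have d1 : HasDerivAt (fun x : ℝ => 1 + x/w) (1/w) x := by
      simpa using ((hasDerivAt_id x).div_const w).const_add 1
    have d2 : HasDerivAt (fun x : ℝ => 1 + x/v) (1/v) x := by
      simpa using ((hasDerivAt_id x).div_const v).const_add 1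
    have l1 : HasDerivAt (fun x : ℝ => Real.log (1+x/w)) ((1/w)/(1+x/w)) x := d1.log h1.ne'
    have l2 : HasDerivAt (fun x : ℝ => Real.log (1+x/v)) ((1/v)/(1+x/v)) x := d2.log h2.ne'
    have dn : HasDerivAt (fun x : ℝ => (v-w)*x) (v-w) x := by
      simpa using (hasDerivAt_id x).const_mul (v-w)
    have dd : HasDerivAt (fun x : ℝ => (v+x)*(w+x)) (1*(w+x)+(v+x)*1) x :=
      ((hasDerivAt_id x).const_add v).mul ((hasDerivAt_id x).const_add w)
    have dq : HasDerivAt (fun x : ℝ => (v-w)*x/((v+x)*(w+x)))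
        (((v-w)*((v+x)*(w+x)) - (v-w)*x*(1*(w+x)+(v+x)*1))/((v+x)*(w+x))^2) x :=
      dn.div dd (by positivity)
    have h : HasDerivAt F _ x := (l1.sub l2).sub dq
    convert h using 1
    field_simp
    ring
  have hmono : MonotoneOn F (Set.Ici (0:ℝ)) := by
    apply monotoneOn_of_deriv_nonneg (convex_Ici 0)
    · intro x hx
      exact (key x hx).continuousAt.continuousWithinAt
    · intro x hx
      rw [interior_Ici] at hx
      exact (key x (le_of_lt hx)).differentiableAt.differentiableWithinAt
    · intro x hx
      rw [interior_Ici, Set.mem_Ioi] at hx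
      rw [(key x hx.le).deriv]
      have hwx : (0:ℝ) < w + x := by linarith [hx.le]
      have hvx : (0:ℝ) < v + x := by linarith [hx.le]
      exact div_nonneg (mul_nonneg (mul_nonneg (by linarith) hx.le) (by linarith [hx.le])) (by positivity)
  have e : ∀ x : ℝ, 0 ≤ x → Real.log ((1+x/w)/(1+x/v)) - (v-w)*x/((v+x)*(w+x)) = F x := by
    intro x hx
    have h1 : (0:ℝ) < 1 + x/w := by positivity
    have h2 : (0:ℝ) < 1 + x/v := by positivity
    rw [hF]
    simp only [Real.log_div h1.ne' h2.ne']
  rw [e a ha, e c (ha.trans hac)]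
  exact hmono ha (Set.mem_Ici.mpr (ha.trans hac)) hac




theorem stmt14 (d J : ℕ) (hd : 0 < d) (hJ : 0 < J) (η : ℝ) (hη : 0 < η)
    (v w : ℝ) (hw : 0 < w) (hwv : w < v)
    (b : ℕ → ℕ) (hbpos : ∀ j ∈ Finset.Icc 1 J, 0 < b j)
    (hbsum : ∑ j ∈ Finset.Icc 1 J, b j = d)
    (hratio : ∀ j ∈ Finset.Icc 1 (J-1), (b (j+1) : ℝ) ≤ (1+η) * (b j : ℝ))
    (m : ℕ → ℕ) (hm : ∀ j, m j = 1 + ∑ k ∈ Finset.Ico 1 j, b k)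
    (f : ℝ → ℝ)
    (hf : ∀ x, f x = Real.log ((1+x/w)/(1+x/v)) - (v-w)*x/((v+x)*(w+x)))
    (τ bar : ℕ → ℝ)
    (hτ0 : ∀ i, 0 ≤ τ i)
    (hτmono : ∀ i j, 1 ≤ i → i ≤ j → j ≤ d → τ j ≤ τ i)
    (hbar : ∀ j ∈ Finset.Icc 1 J, ∀ i ∈ Finset.Ico (m j) (m j + b j), bar i = τ (m j)) :
    (1/2) * ∑ i ∈ Finset.Icc 1 d, f (bar i)
      ≤ ((b 1 : ℝ)/2) * Real.log (v/w)
        + (1+η) * ((1/2) * ∑ i ∈ Finset.Icc 1 d, f (τ i)) := by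
  have hv : 0 < v := hw.trans hwv
  -- index arithmetic
  have hm1 : m 1 = 1 := by rw [hm]; simp
  have hmsucc : ∀ j, 1 ≤ j → m (j+1) = m j + b j := by
    intro j hj
    rw [hm, hm, Finset.sum_Ico_succ_top hj]
    omega
  have hmle : ∀ j k, 1 ≤ j → j ≤ k → m j ≤ m k := by
    intro j k hj hjk
    induction k, hjk using Nat.le_induction with
    | base => exact le_rfl
    | succ k hk ih =>
        have : m (k+1) = m k + b k := hmsucc k (hj.trans hk)
        omega
  have hmJ1 : m (J+1) = d + 1 := by
    rw [hm, Finset.Ico_add_one_right_eq_Icc, hbsum]; omega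
  -- block sums decompose the whole range
  have hdecomp : ∀ h : ℕ → ℝ, ∑ i ∈ Finset.Icc 1 d, h i
      = ∑ j ∈ Finset.Icc 1 J, ∑ i ∈ Finset.Ico (m j) (m j + b j), h i := by
    intro h
    have main : ∀ n : ℕ, ∑ i ∈ Finset.Ico (m 1) (m (n+1)), h i
        = ∑ j ∈ Finset.Icc 1 n, ∑ i ∈ Finset.Ico (m j) (m (j+1)), h i := by
      intro n
      induction n with
      | zero => simp
      | succ n ih =>
          rw [Finset.sum_Icc_succ_top (by omega : 1 ≤ n+1), ← ih,
            Finset.sum_Ico_consecutive h (hmle 1 (n+1) le_rfl (by omega))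
              (hmle (n+1) (n+2) (by omega) (by omega))]
    have h1 : Finset.Icc 1 d = Finset.Ico (m 1) (m (J+1)) := by
      rw [hm1, hmJ1, Finset.Ico_add_one_right_eq_Icc]
    rw [h1, main J]
    exact Finset.sum_congr rfl (fun j hj => by
      rw [hmsucc j (Finset.mem_Icc.mp hj).1])

  -- facts about f
  have hfmono : ∀ a c : ℝ, 0 ≤ a → a ≤ c → f a ≤ f c := by
    intro a c ha hac
    rw [hf a, hf c]
    exact fmono_aux v w hw hwv ha hac
  have hf00 : f 0 = 0 := by rw [hf]; simp
  have hf0 : ∀ x : ℝ, 0 ≤ x → 0 ≤ f x := by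
    intro x hx
    rw [← hf00]; exact hfmono 0 x le_rfl hx
  have hfle : ∀ x : ℝ, 0 ≤ x → f x ≤ Real.log (v/w) := by
    intro x hx
    rw [hf]
    have hwx : (0:ℝ) < w + x := by linarith
    have hvx : (0:ℝ) < v + x := by linarith
    have h2 : 0 ≤ (v-w)*x/((v+x)*(w+x)) :=
      div_nonneg (mul_nonneg (by linarith) hx) (by positivity)
    have h1 : (0:ℝ) < 1 + x/v := by positivity
    have hle : (1+x/w)/(1+x/v) ≤ v/w := by
      rw [div_le_div_iff₀ h1 hw]
      have e1 : (1+x/w)*w = w + x := by field_simp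
      rw [e1]
      have e2 : v*(1+x/v) = v + x := by field_simp
      linarith
    have := Real.log_le_log (by positivity) hle
    linarith
  -- the main estimate
  have sum1 : ∑ i ∈ Finset.Icc 1 d, f (bar i)
      = ∑ j ∈ Finset.Icc 1 J, (b j : ℝ) * f (τ (m j)) := by
    rw [hdecomp (fun i => f (bar i))]
    refine Finset.sum_congr rfl (fun j hj => ?_)
    rw [Finset.sum_congr rfl (fun i hi => by rw [hbar j hj i hi])]
    rw [Finset.sum_const, Nat.card_Ico]
    simp [nsmul_eq_mul]
  have sum2 : ∑ i ∈ Finset.Icc 1 d, f (τ i)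
      = ∑ j ∈ Finset.Icc 1 J, ∑ i ∈ Finset.Ico (m j) (m j + b j), f (τ i) :=
    hdecomp (fun i => f (τ i))
  set T : ℕ → ℝ := fun j => ∑ i ∈ Finset.Ico (m j) (m j + b j), f (τ i) with hT
  have hTnn : ∀ j, 0 ≤ T j := fun j => Finset.sum_nonneg (fun i _ => hf0 _ (hτ0 i))
  -- bound for blocks j ≥ 2
  have hmd : ∀ j, 1 ≤ j → j ≤ J → m j + b j ≤ d + 1 := by
    intro j h1 hj
    rw [← hmsucc j h1, ← hmJ1]; exact hmle (j+1) (J+1) (by omega) (by omega)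
  have blockbound : ∀ j, 2 ≤ j → j ≤ J →
      (b j : ℝ) * f (τ (m j)) ≤ (1+η) * T (j-1) := by
    intro j h2 hjJ
    have hmem : j - 1 ∈ Finset.Icc 1 (J-1) := Finset.mem_Icc.mpr ⟨by omega, by omega⟩
    have hr := hratio (j-1) hmem
    rw [(by omega : j - 1 + 1 = j)] at hr
    have hfnn : 0 ≤ f (τ (m j)) := hf0 _ (hτ0 _)
    have step1 : (b j : ℝ) * f (τ (m j)) ≤ (1+η) * ((b (j-1) : ℝ) * f (τ (m j))) := by
      rw [← mul_assoc]
      exact mul_le_mul_of_nonneg_right hr hfnn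
    have hmjd : m j ≤ d := by
      have := hmd j (by omega) hjJ
      have hbj := hbpos j (Finset.mem_Icc.mpr ⟨by omega, hjJ⟩)
      omega
    have step2 : (b (j-1) : ℝ) * f (τ (m j)) ≤ T (j-1) := by
      have e : m (j-1) + b (j-1) = m j := by
        have := hmsucc (j-1) (by omega)
        rw [(by omega : j - 1 + 1 = j)] at this
        omega
      rw [hT]
      simp only
      calc (b (j-1) : ℝ) * f (τ (m j))
          = ∑ i ∈ Finset.Ico (m (j-1)) (m (j-1) + b (j-1)), f (τ (m j)) := by
            rw [Finset.sum_const, Nat.card_Ico]; simp [nsmul_eq_mul]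
        _ ≤ ∑ i ∈ Finset.Ico (m (j-1)) (m (j-1) + b (j-1)), f (τ i) := by
            refine Finset.sum_le_sum (fun i hi => ?_)
            obtain ⟨hi1, hi2⟩ := Finset.mem_Ico.mp hi
            have h1i : 1 ≤ i := by
              have := hmle 1 (j-1) le_rfl (by omega); omega
            have hile : i ≤ m j := by omega
            exact hfmono _ _ (hτ0 _) (hτmono i (m j) h1i hile hmjd)
    exact step1.trans (mul_le_mul_of_nonneg_left step2 (by linarith))
  -- assemble
  have split : ∑ j ∈ Finset.Icc 1 J, (b j : ℝ) * f (τ (m j))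
      = (b 1 : ℝ) * f (τ (m 1)) + ∑ j ∈ Finset.Ico 2 (J+1), (b j : ℝ) * f (τ (m j)) := by
    rw [← Finset.Ico_add_one_right_eq_Icc, Finset.sum_eq_sum_Ico_succ_bot (by omega : 1 < J + 1)]
  have tail : ∑ j ∈ Finset.Ico 2 (J+1), (b j : ℝ) * f (τ (m j))
      ≤ (1+η) * ∑ j ∈ Finset.Ico 2 (J+1), T (j-1) := by
    rw [Finset.mul_sum]
    refine Finset.sum_le_sum (fun j hj => ?_)
    obtain ⟨h2, hJ1⟩ := Finset.mem_Ico.mp hj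
    exact blockbound j h2 (by omega)
  have reindex : ∑ j ∈ Finset.Ico 2 (J+1), T (j-1) = ∑ j ∈ Finset.Ico 1 J, T j := by
    rw [Finset.sum_Ico_eq_sum_range, Finset.sum_Ico_eq_sum_range]
    refine Finset.sum_congr (by congr 1) (fun i _ => by congr 1; omega)
  have tail2 : ∑ j ∈ Finset.Ico 1 J, T j ≤ ∑ j ∈ Finset.Icc 1 J, T j := by
    rw [← Finset.Ico_add_one_right_eq_Icc, Finset.sum_Ico_succ_top (by omega : 1 ≤ J)]
    linarith [hTnn J]
  have hb1 : (0:ℝ) ≤ (b 1 : ℝ) := Nat.cast_nonneg _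
  have head : (b 1 : ℝ) * f (τ (m 1)) ≤ (b 1 : ℝ) * Real.log (v/w) :=
    mul_le_mul_of_nonneg_left (hfle _ (hτ0 _)) hb1
  have hS : ∑ j ∈ Finset.Icc 1 J, T j = ∑ i ∈ Finset.Icc 1 d, f (τ i) := sum2.symm
  have final : ∑ i ∈ Finset.Icc 1 d, f (bar i)
      ≤ (b 1 : ℝ) * Real.log (v/w) + (1+η) * ∑ i ∈ Finset.Icc 1 d, f (τ i) := by
    rw [sum1, split]
    have h1η : (0:ℝ) ≤ 1 + η := by linarith
    calc (b 1 : ℝ) * f (τ (m 1)) + ∑ j ∈ Finset.Ico 2 (J+1), (b j : ℝ) * f (τ (m j))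
        ≤ (b 1 : ℝ) * Real.log (v/w) + (1+η) * ∑ j ∈ Finset.Ico 2 (J+1), T (j-1) := by
          linarith [tail]
      _ ≤ (b 1 : ℝ) * Real.log (v/w) + (1+η) * ∑ i ∈ Finset.Icc 1 d, f (τ i) := by
          rw [reindex]
          have := mul_le_mul_of_nonneg_left (tail2.trans_eq hS) h1η
          linarith
  linarith
end
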